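/- Let S be a numerical semigroup with multiplicity m. Then S is m-irreducible if and only if |{x ∈ SG(S) : x > m}| ≤ 1, where SG(S) is the set of special gaps of S. -/

import Mathlib

def IsNumericalSemigroup (S : Set ℕ) : Prop :=
  0 ∈ S ∧ (∀ a ∈ S, ∀ b ∈ S, a + b ∈ S) ∧ Sᶜ.Finite

noncomputable def multNS (S : Set ℕ) : ℕ := sInf {x ∈ S | x ≠ 0}

noncomputable def frobNS (S : Set ℕ) : ℕ := sSup Sᶜ

noncomputable def genusNS (S : Set ℕ) : ℕ := Sᶜ.ncard

/-- `S` is `m`-irreducible: it lies in `𝒮(m)` and is not the intersection of two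
elements of `𝒮(m)` properly containing it. -/
def MIrreducibleNS (m : ℕ) (S : Set ℕ) : Prop :=
  IsNumericalSemigroup S ∧ multNS S = m ∧
    ¬∃ S₁ S₂ : Set ℕ, (IsNumericalSemigroup S₁ ∧ multNS S₁ = m) ∧
      (IsNumericalSemigroup S₂ ∧ multNS S₂ = m) ∧ S ⊂ S₁ ∧ S ⊂ S₂ ∧ S = S₁ ∩ S₂

/-- `S` is irreducible: not the intersection of two numerical semigroups properly
containing it. -/
def IrreducibleNS (S : Set ℕ) : Prop :=
  IsNumericalSemigroup S ∧
    ¬∃ S₁ S₂ : Set ℕ, IsNumericalSemigroup S₁ ∧ IsNumericalSemigroup S₂ ∧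
      S ⊂ S₁ ∧ S ⊂ S₂ ∧ S = S₁ ∩ S₂

lemma nsProps {S : Set ℕ} (hS : IsNumericalSemigroup S) :
    multNS S ∈ S ∧ multNS S ≠ 0 ∧ ∀ y ∈ S, y ≠ 0 → multNS S ≤ y := by
  have hinf : S.Infinite := Set.infinite_of_finite_compl hS.2.2
  have hne : {x ∈ S | x ≠ 0}.Nonempty := by
    obtain ⟨y, hy⟩ := (hinf.diff (Set.finite_singleton 0)).nonempty
    exact ⟨y, hy.1, by simpa using hy.2⟩
  have hmem := Nat.sInf_mem hne
  exact ⟨hmem.1, hmem.2, fun y hy hy0 => Nat.sInf_le ⟨hy, hy0⟩⟩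

lemma multUnion {S : Set ℕ} (hS : IsNumericalSemigroup S) {x : ℕ} (hx : multNS S < x) :
    multNS (S ∪ {x}) = multNS S := by
  obtain ⟨hm, hm0, hmin⟩ := nsProps hS
  apply le_antisymm
  · exact Nat.sInf_le ⟨Or.inl hm, hm0⟩
  · refine le_csInf ⟨multNS S, ⟨Or.inl hm, hm0⟩⟩ ?_
    rintro y ⟨hy | hy, hy0⟩
    · exact hmin y hy hy0
    · simp only [Set.mem_singleton_iff] at hy; omega

/-- A maximal element of `S₁ \ S` is a special gap of `S`, and exceeds the
multiplicity when both semigroups share it. -/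
lemma specialGapOfMax {S S₁ : Set ℕ} (hS : IsNumericalSemigroup S)
    (hS₁ : IsNumericalSemigroup S₁) (hmeq : multNS S₁ = multNS S) (hsub : S ⊆ S₁)
    {x : ℕ} (hx₁ : x ∈ S₁) (hxS : x ∉ S) (hmax : ∀ y ∈ S₁, y ∉ S → y ≤ x) :
    (x ∉ S ∧ IsNumericalSemigroup (S ∪ {x})) ∧ multNS S < x := by
  obtain ⟨hmS, hm0, _⟩ := nsProps hS
  obtain ⟨_, _, hmin₁⟩ := nsProps hS₁
  have hx0 : x ≠ 0 := fun h => hxS (h ▸ hS.1)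
  -- anything in S₁ larger than x must be in S
  have key : ∀ y ∈ S₁, x < y → y ∈ S := by
    intro y hy hlt
    by_contra hyn
    exact absurd (hmax y hy hyn) (by omega)
  have hxm : multNS S < x := by
    have h1 : multNS S ≤ x := hmeq ▸ hmin₁ x hx₁ hx0
    have h2 : multNS S ≠ x := fun h => hxS (h ▸ hmS)
    omega
  refine ⟨⟨hxS, Or.inl hS.1, ?_, ?_⟩, hxm⟩
  · rintro a (ha | ha) b (hb | hb)
    · exact Or.inl (hS.2.1 a ha b hb)
    · simp only [Set.mem_singleton_iff] at hb
      rw [hb]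
      rcases Nat.eq_zero_or_pos a with h0 | hpos
      · rw [h0]; exact Or.inr (by simp)
      · exact Or.inl (key _ (hS₁.2.1 a (hsub ha) x hx₁) (by omega))
    · simp only [Set.mem_singleton_iff] at ha
      rw [ha]
      rcases Nat.eq_zero_or_pos b with h0 | hpos
      · rw [h0]; exact Or.inr (by simp)
      · exact Or.inl (key _ (hS₁.2.1 x hx₁ b (hsub hb)) (by omega))
    · simp only [Set.mem_singleton_iff] at ha hb
      rw [ha, hb]
      exact Or.inl (key _ (hS₁.2.1 x hx₁ x hx₁) (by omega))
  · apply hS.2.2.subset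
    intro y hy
    simp only [Set.mem_compl_iff, Set.mem_union] at hy ⊢
    exact fun h => hy (Or.inl h)

theorem stmt17 (m : ℕ) (S : Set ℕ) (hS : IsNumericalSemigroup S) (hm : multNS S = m) :
    MIrreducibleNS m S ↔
      {x : ℕ | (x ∉ S ∧ IsNumericalSemigroup (S ∪ {x})) ∧ m < x}.ncard ≤ 1 := by
  set A : Set ℕ := {x : ℕ | (x ∉ S ∧ IsNumericalSemigroup (S ∪ {x})) ∧ m < x} with hA
  have hAfin : A.Finite := hS.2.2.subset (fun x hx => hx.1.1)
  constructor
  · rintro ⟨_, _, hirr⟩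
    by_contra hg
    push_neg at hg
    obtain ⟨x₁, x₂, h₁, h₂, hne⟩ := (Set.one_lt_ncard_iff hAfin).mp hg
    apply hirr
    refine ⟨S ∪ {x₁}, S ∪ {x₂}, ⟨h₁.1.2, ?_⟩, ⟨h₂.1.2, ?_⟩, ?_, ?_, ?_⟩
    · rw [multUnion hS (by rw [hm]; exact h₁.2)]; exact hm
    · rw [multUnion hS (by rw [hm]; exact h₂.2)]; exact hm
    · exact ⟨Set.subset_union_left, fun hcon => h₁.1.1 (hcon (Or.inr rfl))⟩
    · exact ⟨Set.subset_union_left, fun hcon => h₂.1.1 (hcon (Or.inr rfl))⟩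
    · ext y
      constructor
      · exact fun hy => ⟨Or.inl hy, Or.inl hy⟩
      · rintro ⟨hy₁ | hy₁, hy₂ | hy₂⟩ <;>
          simp_all [Set.mem_singleton_iff]
  · intro hcard
    refine ⟨hS, hm, ?_⟩
    rintro ⟨S₁, S₂, ⟨h₁, hm₁⟩, ⟨h₂, hm₂⟩, hs₁, hs₂, heq⟩
    have hd₁ : (S₁ \ S).Finite := hS.2.2.subset (fun y hy => hy.2)
    have hd₂ : (S₂ \ S).Finite := hS.2.2.subset (fun y hy => hy.2)
    obtain ⟨x₁, hx₁, hmax₁⟩ :=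
      Set.Finite.exists_maximalFor id _ hd₁ (Set.nonempty_of_ssubset hs₁)
    obtain ⟨x₂, hx₂, hmax₂⟩ :=
      Set.Finite.exists_maximalFor id _ hd₂ (Set.nonempty_of_ssubset hs₂)
    have hmax₁' : ∀ y ∈ S₁, y ∉ S → y ≤ x₁ := by
      intro y hy hyn
      by_contra hlt
      push_neg at hlt
      exact absurd (hmax₁ ⟨hy, hyn⟩ (le_of_lt hlt)) (not_le.mpr hlt)
    have hmax₂' : ∀ y ∈ S₂, y ∉ S → y ≤ x₂ := by
      intro y hy hyn
      by_contra hlt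
      push_neg at hlt
      exact absurd (hmax₂ ⟨hy, hyn⟩ (le_of_lt hlt)) (not_le.mpr hlt)
    have hg₁ := specialGapOfMax hS h₁ (by rw [hm₁, hm]) hs₁.subset hx₁.1 hx₁.2 hmax₁'
    have hg₂ := specialGapOfMax hS h₂ (by rw [hm₂, hm]) hs₂.subset hx₂.1 hx₂.2 hmax₂'
    have hA₁ : x₁ ∈ A := ⟨hg₁.1, hm ▸ hg₁.2⟩
    have hA₂ : x₂ ∈ A := ⟨hg₂.1, hm ▸ hg₂.2⟩
    have hne : x₁ ≠ x₂ := by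
      intro h
      subst h
      exact hx₁.2 (heq ▸ Set.mem_inter hx₁.1 hx₂.1 : x₁ ∈ S)
    have : 1 < A.ncard := (Set.one_lt_ncard_iff hAfin).mpr ⟨x₁, x₂, hA₁, hA₂, hne⟩
    omega
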